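/- For an odd prime q and residues d, t mod q with d ≠ 0, the number of matrices g ∈ GL₂(ℤ/qℤ) with det(g) = d and tr(g) = t equals q·(q + ((t²-4d)/q)), where (·/q) is the Legendre symbol. -/

import Mathlib

open Finset

section Aux

variable {q : ℕ} [Fact q.Prime]

lemma aux_card_mul_eq (m : ZMod q) :
    (Finset.univ.filter fun p : ZMod q × ZMod q => p.1 * p.2 = m).card
      = (q - 1) + if m = 0 then q else 0 := by
  have hq : 1 < q := (Fact.out : q.Prime).one_lt
  rcases eq_or_ne m 0 with rfl | hm
  · rw [if_pos rfl]
    have h1 : (Finset.univ.filter fun p : ZMod q × ZMod q => p.1 * p.2 = 0)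
        = ({(0 : ZMod q)} ×ˢ (univ : Finset (ZMod q))) ∪
          ((univ : Finset (ZMod q)) ×ˢ {(0 : ZMod q)}) := by
      ext p
      simp only [mem_filter, mem_univ, true_and, mem_union, mem_product, mem_singleton,
        mul_eq_zero]
      tauto
    have h2 : (({(0 : ZMod q)} ×ˢ (univ : Finset (ZMod q))) ∩
          ((univ : Finset (ZMod q)) ×ˢ {(0 : ZMod q)})) = {((0 : ZMod q), (0 : ZMod q))} := by
      ext p
      simp only [mem_inter, mem_product, mem_singleton, mem_univ, and_true, true_and,
        Prod.ext_iff]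
    have := Finset.card_union_add_card_inter
      ({(0 : ZMod q)} ×ˢ (univ : Finset (ZMod q)))
      ((univ : Finset (ZMod q)) ×ˢ {(0 : ZMod q)})
    rw [h2] at this
    rw [h1]
    simp only [Finset.card_singleton, Finset.card_product, Finset.card_univ, ZMod.card,
      one_mul, mul_one] at this ⊢
    omega
  · rw [if_neg hm, add_zero]
    have := Finset.card_bij'
      (s := (univ : Finset (ZMod q)).filter fun b => b ≠ 0)
      (t := Finset.univ.filter fun p : ZMod q × ZMod q => p.1 * p.2 = m)
      (i := fun b _ => (b, b⁻¹ * m)) (j := fun p _ => p.1)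
      (by
        intro b hb
        simp only [mem_filter, mem_univ, true_and] at hb ⊢
        field_simp)
      (by
        intro p hp
        simp only [mem_filter, mem_univ, true_and] at hp ⊢
        intro h
        rw [h, zero_mul] at hp
        exact hm hp.symm)
      (by intro b hb; rfl)
      (by
        intro p hp
        simp only [mem_filter, mem_univ, true_and] at hp
        have h1 : p.1 ≠ 0 := by
          intro h
          rw [h, zero_mul] at hp
          exact hm hp.symm
        have : p.1⁻¹ * m = p.2 := by
          rw [← hp]; field_simp
        rw [Prod.ext_iff]
        exact ⟨rfl, this⟩)
    rw [← this]
    rw [Finset.filter_ne', Finset.card_erase_of_mem (mem_univ _), Finset.card_univ, ZMod.card]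

end Aux

/-- For an odd prime `q`, a nonzero residue `d` and any residue `t` mod `q`,
the number of `g ∈ GL₂(ℤ/qℤ)` with `det g = d` and `tr g = t` equals
`q (q + ((t²-4d)/q))`. -/
theorem card_GL2_det_tr_prime (q : ℕ) [Fact q.Prime] (hodd : Odd q)
    (d t : ZMod q) (hd : d ≠ 0) :
    ((Finset.univ.filter fun g : Matrix (Fin 2) (Fin 2) (ZMod q) =>
        IsUnit g.det ∧ g.det = d ∧ g.trace = t).card : ℤ) =
      (q : ℤ) * ((q : ℤ) + legendreSym q ((t.val : ℤ) ^ 2 - 4 * (d.val : ℤ))) := by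
  have hq2 : q ≠ 2 := by rintro rfl; exact (by norm_num : ¬ Odd 2) hodd
  have h2 : (2 : ZMod q) ≠ 0 := by
    have : ((2 : ℕ) : ZMod q) ≠ 0 := by
      rw [Ne, ZMod.natCast_eq_zero_iff]
      intro h
      exact hq2 ((Nat.prime_dvd_prime_iff_eq (Fact.out) Nat.prime_two).mp h)
    simpa using this
  -- Step 1: reparametrize matrices by (a, b, c)
  have step1 : (Finset.univ.filter fun g : Matrix (Fin 2) (Fin 2) (ZMod q) =>
        IsUnit g.det ∧ g.det = d ∧ g.trace = t).card
      = (Finset.univ.filter fun p : ZMod q × ZMod q × ZMod q =>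
          p.1 * (t - p.1) - p.2.1 * p.2.2 = d).card := by
    refine Finset.card_bij' (fun g _ => (g 0 0, g 0 1, g 1 0))
      (fun p _ => !![p.1, p.2.1; p.2.2, t - p.1]) ?_ ?_ ?_ ?_
    · intro g hg
      simp only [mem_filter, mem_univ, true_and] at hg
      obtain ⟨_, hdet, htr⟩ := hg
      rw [Matrix.det_fin_two] at hdet
      rw [Matrix.trace_fin_two] at htr
      simp only [mem_filter, mem_univ, true_and]
      have : g 1 1 = t - g 0 0 := by linear_combination htr
      rw [← this]
      linear_combination hdet
    · intro p hp
      simp only [mem_filter, mem_univ, true_and] at hp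
      simp only [mem_filter, mem_univ, true_and]
      have hdet : (!![p.1, p.2.1; p.2.2, t - p.1] : Matrix (Fin 2) (Fin 2) (ZMod q)).det = d := by
        rw [Matrix.det_fin_two]
        simpa using hp
      refine ⟨?_, hdet, ?_⟩
      · rw [hdet]; exact isUnit_iff_ne_zero.mpr hd
      · rw [Matrix.trace_fin_two]; simp
    · intro g hg
      simp only [mem_filter, mem_univ, true_and] at hg
      have htr := hg.2.2
      rw [Matrix.trace_fin_two] at htr
      ext i j
      fin_cases i <;> fin_cases j <;> simp
      linear_combination -htr
    · intro p hp
      simp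
  rw [step1]
  -- Step 2: fiber over the first coordinate
  have step2 : (Finset.univ.filter fun p : ZMod q × ZMod q × ZMod q =>
          p.1 * (t - p.1) - p.2.1 * p.2.2 = d).card
      = ∑ a : ZMod q, (Finset.univ.filter fun p : ZMod q × ZMod q =>
          p.1 * p.2 = a * (t - a) - d).card := by
    rw [Finset.card_eq_sum_card_fiberwise
      (f := fun p : ZMod q × ZMod q × ZMod q => p.1) (t := univ) (fun _ _ => mem_univ _)]
    refine Finset.sum_congr rfl fun a _ => ?_
    refine Finset.card_bij' (fun p _ => p.2) (fun p _ => (a, p)) ?_ ?_ ?_ ?_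
    · intro p hp
      simp only [mem_filter, mem_univ, true_and] at hp ⊢
      obtain ⟨h1, h2⟩ := hp
      rw [h2] at h1
      linear_combination -h1
    · intro p hp
      simp only [mem_filter, mem_univ, true_and] at hp ⊢
      exact ⟨by linear_combination -hp, trivial⟩
      
    · intro p hp
      simp only [mem_filter, mem_univ, true_and] at hp
      exact Prod.ext_iff.mpr ⟨hp.2.symm, rfl⟩
    · intro p hp; rfl
  rw [step2]
  -- Step 3: evaluate the inner count
  have step3 : ∑ a : ZMod q, (Finset.univ.filter fun p : ZMod q × ZMod q =>
          p.1 * p.2 = a * (t - a) - d).card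
      = q * (q - 1) + q * (Finset.univ.filter fun a : ZMod q =>
          a * (t - a) - d = 0).card := by
    simp only [aux_card_mul_eq]
    rw [Finset.sum_add_distrib, Finset.sum_const, Finset.card_univ, ZMod.card, smul_eq_mul,
      ← Finset.sum_filter, Finset.sum_const, smul_eq_mul]
    ring
  rw [step3]
  -- Step 4: count roots of the quadratic
  have step4 : ((Finset.univ.filter fun a : ZMod q => a * (t - a) - d = 0).card : ℤ)
      = legendreSym q ((t.val : ℤ) ^ 2 - 4 * (d.val : ℤ)) + 1 := by
    have hset : ({x : ZMod q | x ^ 2 = (((t.val : ℤ) ^ 2 - 4 * (d.val : ℤ) : ℤ) : ZMod q)}.toFinset)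
        = Finset.univ.filter fun x : ZMod q => x ^ 2 = t ^ 2 - 4 * d := by
      have : (((t.val : ℤ) ^ 2 - 4 * (d.val : ℤ) : ℤ) : ZMod q) = t ^ 2 - 4 * d := by
        push_cast [ZMod.natCast_val, ZMod.cast_id]
        ring
      rw [this]
      ext x
      simp
    have hcard : (Finset.univ.filter fun a : ZMod q => a * (t - a) - d = 0).card
        = (Finset.univ.filter fun x : ZMod q => x ^ 2 = t ^ 2 - 4 * d).card := by
      refine Finset.card_bij' (fun a _ => 2 * a - t) (fun x _ => (x + t) * (2 : ZMod q)⁻¹)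
        ?_ ?_ ?_ ?_
      · intro a ha
        simp only [mem_filter, mem_univ, true_and] at ha ⊢
        linear_combination (-4 : ZMod q) * ha
      · intro x hx
        simp only [mem_filter, mem_univ, true_and] at hx ⊢
        have h4 : (2 : ZMod q) * (2 : ZMod q)⁻¹ = 1 := mul_inv_cancel₀ h2
        field_simp
        linear_combination -hx
      · intro a ha
        field_simp
        ring
      · intro x hx
        field_simp
        ring
    rw [hcard, ← legendreSym.card_sqrts q hq2, hset]
  push_cast
  rw [step4]
  have hq1 : (1 : ℤ) ≤ q := by exact_mod_cast Nat.one_le_of_lt (Fact.out : q.Prime).one_lt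
  push_cast [Nat.cast_sub (by omega : 1 ≤ q)]
  ring
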